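/- Let c be a real number with 1 < c < 4109054/1999527 and c ≠ 2, and for a sufficiently large integer N set P = N^{1/c} and G(α) = Σ_{m ≤ N} (1/c)·m^{1/c - 1}·e(mα). Then ∫_{-1/2}^{1/2} |G(α)|^4 dα ≪ N^{4/c - 1} = P^{4-c}, with implied constant depending only on c. -/

import Mathlib

open scoped Classical
open Finset Real MeasureTheory

/-- `eC x = e(x) = e^{2πix}`. -/
noncomputable def eC (x : ℝ) : ℂ := Complex.exp ((2 * Real.pi * x : ℝ) * Complex.I)

/-- `G c N α = Σ_{1 ≤ m ≤ N} (1/c) m^{1/c-1} e(mα)`. -/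
noncomputable def G (c : ℝ) (N : ℕ) (α : ℝ) : ℂ :=
  ∑ m ∈ Finset.Icc 1 N, ((1 / c * (m : ℝ) ^ (1 / c - 1) : ℝ) : ℂ) * eC ((m : ℝ) * α)

noncomputable def A (c : ℝ) (m : ℕ) : ℝ := 1 / c * (m : ℝ) ^ (1 / c - 1)

lemma term_le_integral {s : ℝ} (hs1 : -1 < s) (hs0 : s < 0) (m : ℕ) (hm : 1 ≤ m) :
    (m : ℝ) ^ s ≤ ∫ x in ((m : ℝ) - 1)..(m : ℝ), x ^ s := by
  rcases eq_or_lt_of_le hm with h | h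
  · subst_vars
    rw [show ((1:ℕ):ℝ) - 1 = 0 by norm_num, integral_rpow (Or.inl hs1)]
    rw [Real.zero_rpow (by linarith)]
    push_cast
    rw [Real.one_rpow, Real.one_rpow]
    rw [le_div_iff₀ (by linarith)]
    nlinarith
  · have h2' : (2:ℝ) ≤ (m:ℝ) := by exact_mod_cast h
    have : (m:ℝ) ^ s = ∫ _x in ((m : ℝ) - 1)..(m : ℝ), (m:ℝ) ^ s := by simp
    rw [this]
    apply intervalIntegral.integral_mono_on (by linarith)
    · exact intervalIntegrable_const
    · exact intervalIntegral.intervalIntegrable_rpow' hs1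
    · intro x hx
      rcases hx with ⟨hx1, hx2⟩
      exact Real.rpow_le_rpow_of_nonpos (by linarith) hx2 hs0.le

lemma sum_Icc_one_eq_range {f : ℕ → ℝ} (M : ℕ) :
    ∑ m ∈ Finset.Icc 1 M, f m = ∑ i ∈ Finset.range M, f (i + 1) := by
  apply Finset.sum_nbij' (fun m => m - 1) (fun i => i + 1) <;> intros <;>
    simp_all [Finset.mem_Icc, Finset.mem_range] <;> omega

lemma sum_rpow_le {s : ℝ} (hs1 : -1 < s) (hs0 : s < 0) (M : ℕ) :
    ∑ m ∈ Finset.Icc 1 M, (m : ℝ) ^ s ≤ (M : ℝ) ^ (s + 1) / (s + 1) := by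
  have key : ∑ m ∈ Finset.Icc 1 M, (m : ℝ) ^ s ≤ ∫ x in (0:ℝ)..(M:ℝ), x ^ s := by
    rw [sum_Icc_one_eq_range]
    have adj := intervalIntegral.sum_integral_adjacent_intervals (f := fun x : ℝ => x ^ s)
      (μ := volume) (a := fun i : ℕ => (i:ℝ)) (n := M)
      (fun k _ => intervalIntegral.intervalIntegrable_rpow' hs1)
    push_cast at adj
    rw [← adj]
    apply Finset.sum_le_sum
    intro i _
    have := term_le_integral hs1 hs0 (i + 1) (by omega)
    simpa using this
  refine key.trans ?_
  rw [integral_rpow (Or.inl hs1), Real.zero_rpow (by linarith)]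
  simp

lemma conv_bound {s : ℝ} (hs1 : -1 < s) (hs0 : s < 0) (n : ℕ) (hn : 1 ≤ n) :
    ∑ m ∈ Finset.Icc 1 (n - 1), (m : ℝ) ^ s * ((n - m : ℕ) : ℝ) ^ s
      ≤ (2 * (2:ℝ) ^ (-s) / (s + 1)) * (n : ℝ) ^ (2 * s + 1) := by
  have hn' : (1:ℝ) ≤ (n:ℝ) := by exact_mod_cast hn
  set f : ℕ → ℝ := fun m => (m : ℝ) ^ s * ((n - m : ℕ) : ℝ) ^ s with hf
  have hfnn : ∀ m, 0 ≤ f m := fun m =>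
    mul_nonneg (Real.rpow_nonneg (Nat.cast_nonneg _) _) (Real.rpow_nonneg (Nat.cast_nonneg _) _)
  have hsplit : ∑ m ∈ Finset.Icc 1 (n - 1), f m
      = ∑ m ∈ (Finset.Icc 1 (n - 1)).filter (fun m => 2 * m ≤ n), f m
      + ∑ m ∈ (Finset.Icc 1 (n - 1)).filter (fun m => ¬ 2 * m ≤ n), f m :=
    (Finset.sum_filter_add_sum_filter_not _ _ _).symm
  have hswap : ∑ m ∈ (Finset.Icc 1 (n - 1)).filter (fun m => ¬ 2 * m ≤ n), f m
      = ∑ m ∈ (Finset.Icc 1 (n - 1)).filter (fun m => 2 * m < n), f m := by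
    apply Finset.sum_nbij' (fun m => n - m) (fun m => n - m)
    · intro a ha
      simp only [Finset.mem_filter, Finset.mem_Icc] at ha ⊢
      omega
    · intro a ha
      simp only [Finset.mem_filter, Finset.mem_Icc] at ha ⊢
      omega
    · intro a ha
      simp only [Finset.mem_filter, Finset.mem_Icc] at ha; omega
    · intro a ha
      simp only [Finset.mem_filter, Finset.mem_Icc] at ha; omega
    · intro a ha
      simp only [Finset.mem_filter, Finset.mem_Icc] at ha
      have : n - (n - a) = a := by omega
      rw [hf]; dsimp only; rw [this, mul_comm]
  have hsub : ∑ m ∈ (Finset.Icc 1 (n - 1)).filter (fun m => 2 * m < n), f m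
      ≤ ∑ m ∈ (Finset.Icc 1 (n - 1)).filter (fun m => 2 * m ≤ n), f m := by
    apply Finset.sum_le_sum_of_subset_of_nonneg
    · exact Finset.monotone_filter_right _ (fun a _ ha => le_of_lt ha)
    · intro i _ _; exact hfnn i
  have hhalf : ∑ m ∈ (Finset.Icc 1 (n - 1)).filter (fun m => 2 * m ≤ n), f m
      ≤ ((n:ℝ)/2) ^ s * ((n : ℝ) ^ (s + 1) / (s + 1)) := by
    have step1 : ∑ m ∈ (Finset.Icc 1 (n - 1)).filter (fun m => 2 * m ≤ n), f m
        ≤ ∑ m ∈ (Finset.Icc 1 (n - 1)).filter (fun m => 2 * m ≤ n), ((n:ℝ)/2) ^ s * (m:ℝ) ^ s := by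
      apply Finset.sum_le_sum
      intro m hm
      simp only [Finset.mem_filter, Finset.mem_Icc] at hm
      rw [hf, mul_comm (((n:ℝ)/2) ^ s)]
      apply mul_le_mul_of_nonneg_left _ (Real.rpow_nonneg (Nat.cast_nonneg _) _)
      apply Real.rpow_le_rpow_of_nonpos (by linarith) _ hs0.le
      have : ((n - m : ℕ) : ℝ) = (n:ℝ) - (m:ℝ) := by
        have : m ≤ n := by omega
        push_cast [this]; ring
      rw [this]
      have h2m : (2:ℝ) * (m:ℝ) ≤ (n:ℝ) := by exact_mod_cast hm.2
      linarith
    refine step1.trans ?_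
    rw [← Finset.mul_sum]
    apply mul_le_mul_of_nonneg_left _ (Real.rpow_nonneg (by positivity) _)
    calc ∑ m ∈ (Finset.Icc 1 (n - 1)).filter (fun m => 2 * m ≤ n), (m:ℝ) ^ s
        ≤ ∑ m ∈ Finset.Icc 1 n, (m:ℝ) ^ s := by
          apply Finset.sum_le_sum_of_subset_of_nonneg
          · intro a ha
            simp only [Finset.mem_filter, Finset.mem_Icc] at ha ⊢; omega
          · intro i _ _; exact Real.rpow_nonneg (Nat.cast_nonneg _) _
      _ ≤ (n : ℝ) ^ (s + 1) / (s + 1) := sum_rpow_le hs1 hs0 n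
  have hfinal : ((n:ℝ)/2) ^ s * ((n : ℝ) ^ (s + 1) / (s + 1))
      = ((2:ℝ) ^ (-s) / (s + 1)) * (n : ℝ) ^ (2 * s + 1) := by
    have hmul : (n:ℝ) ^ (2 * s + 1) = (n:ℝ) ^ s * (n:ℝ) ^ (s + 1) := by
      rw [← Real.rpow_add (by linarith)]; ring_nf
    rw [Real.div_rpow (by linarith) (by norm_num), Real.rpow_neg (by norm_num), hmul]
    ring
  calc ∑ m ∈ Finset.Icc 1 (n - 1), f m
      ≤ 2 * (((n:ℝ)/2) ^ s * ((n : ℝ) ^ (s + 1) / (s + 1))) := by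
        rw [hsplit, hswap]; linarith [hsub, hhalf, hsub.trans hhalf]
    _ = (2 * (2:ℝ) ^ (-s) / (s + 1)) * (n : ℝ) ^ (2 * s + 1) := by rw [hfinal]; ring

lemma eC_mul_eC (x y : ℝ) : eC x * eC y = eC (x + y) := by
  rw [eC, eC, eC, ← Complex.exp_add]
  congr 1
  push_cast
  ring

lemma conj_eC (x : ℝ) : (starRingEnd ℂ) (eC x) = eC (-x) := by
  rw [eC, eC, ← Complex.exp_conj, map_mul, Complex.conj_ofReal, Complex.conj_I]
  congr 1
  push_cast
  ring

lemma continuous_eC_mul (m : ℝ) : Continuous fun α : ℝ => eC (m * α) := by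
  unfold eC
  fun_prop

lemma integral_eC (k : ℤ) (hk : k ≠ 0) :
    ∫ α in (-(1:ℝ)/2)..(1/2), eC ((k : ℝ) * α) = 0 := by
  have h : ∀ α : ℝ, eC ((k:ℝ) * α) = Complex.exp ((2 * (Real.pi:ℂ) * (k:ℂ) * Complex.I) * α) := by
    intro α
    rw [eC]
    congr 1
    push_cast
    ring
  have hc : (2 * (Real.pi:ℂ) * (k:ℂ) * Complex.I) ≠ 0 :=
    mul_ne_zero (mul_ne_zero (mul_ne_zero two_ne_zero
      (Complex.ofReal_ne_zero.2 Real.pi_ne_zero)) (Int.cast_ne_zero.2 hk)) Complex.I_ne_zero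
  simp only [h]
  rw [integral_exp_mul_complex hc]
  have hexp : Complex.exp (2 * (Real.pi:ℂ) * (k:ℂ) * Complex.I * (((1:ℝ)/2 : ℝ) : ℂ))
      = Complex.exp (2 * (Real.pi:ℂ) * (k:ℂ) * Complex.I * (((-(1:ℝ)/2 : ℝ)) : ℂ)) := by
    rw [Complex.exp_eq_exp_iff_exists_int]
    exact ⟨k, by push_cast; ring⟩
  rw [hexp]
  simp

lemma expand_integral (c : ℝ) (N : ℕ) :
    ∫ α in (-(1:ℝ)/2)..(1/2), ‖G c N α‖ ^ 4
    = ∑ m1 ∈ Finset.Icc 1 N, ∑ m2 ∈ Finset.Icc 1 N, ∑ m3 ∈ Finset.Icc 1 N,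
        ∑ m4 ∈ Finset.Icc 1 N,
          (if m1 + m2 = m3 + m4 then A c m1 * A c m2 * A c m3 * A c m4 else 0) := by
  classical
  set s := Finset.Icc 1 N with hs
  -- the complex integrand
  set F : ℝ → ℂ := fun α => (G c N α) ^ 2 * ((starRingEnd ℂ) (G c N α)) ^ 2 with hF
  have hGcont : Continuous (G c N) := by
    apply continuous_finset_sum
    intro m _
    exact continuous_const.mul (continuous_eC_mul (m : ℝ))
  have hFcont : Continuous F := by
    apply Continuous.mul
    · exact (hGcont.pow 2)
    · exact ((Complex.continuous_conj.comp hGcont).pow 2)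
  -- pointwise real part
  have hpt : ∀ α, ‖G c N α‖ ^ 4 = (F α).re := by
    intro α
    have h1 : F α = (G c N α * (starRingEnd ℂ) (G c N α)) ^ 2 := by rw [hF]; ring
    rw [h1, Complex.mul_conj]
    have : ((Complex.normSq (G c N α) : ℂ)) ^ 2 = ((Complex.normSq (G c N α) ^ 2 : ℝ) : ℂ) := by
      push_cast; ring
    rw [this, Complex.ofReal_re, Complex.normSq_eq_norm_sq]
    ring
  -- expansion of F
  have hFeq : ∀ α, F α = ∑ m1 ∈ s, ∑ m2 ∈ s, ∑ m3 ∈ s, ∑ m4 ∈ s,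
      ((A c m1 * A c m2 * A c m3 * A c m4 : ℝ) : ℂ)
        * eC (((m4 : ℝ) + (m3 : ℝ) - (m2 : ℝ) - (m1 : ℝ)) * α) := by
    intro α
    have hconj : (starRingEnd ℂ) (G c N α)
        = ∑ m ∈ s, ((A c m : ℝ) : ℂ) * eC (-((m : ℝ) * α)) := by
      rw [G, map_sum]
      apply Finset.sum_congr rfl
      intro m _
      rw [map_mul, Complex.conj_ofReal, conj_eC]
      rfl
    have hG : G c N α = ∑ m ∈ s, ((A c m : ℝ) : ℂ) * eC ((m : ℝ) * α) := rfl
    show (G c N α) ^ 2 * ((starRingEnd ℂ) (G c N α)) ^ 2 = _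
    rw [hconj, hG]
    simp only [sq, Finset.sum_mul, Finset.mul_sum]
    apply Finset.sum_congr rfl; intro m1 _
    apply Finset.sum_congr rfl; intro m2 _
    apply Finset.sum_congr rfl; intro m3 _
    apply Finset.sum_congr rfl; intro m4 _
    rw [show ((m4 : ℝ) + (m3 : ℝ) - (m2 : ℝ) - (m1 : ℝ)) * α
        = ((m4:ℝ)*α + ((m3:ℝ)*α + (-((m2:ℝ)*α) + -((m1:ℝ)*α)))) by ring,
      ← eC_mul_eC, ← eC_mul_eC, ← eC_mul_eC]
    push_cast
    ring
  -- integrate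
  have hFint : IntervalIntegrable F volume (-(1:ℝ)/2) (1/2) := hFcont.intervalIntegrable _ _
  have hre : (∫ α in (-(1:ℝ)/2)..(1/2), ‖G c N α‖ ^ 4)
      = (∫ α in (-(1:ℝ)/2)..(1/2), F α).re := by
    have hcomm := Complex.reCLM.intervalIntegral_comp_comm hFint
    simp only [Complex.reCLM_apply] at hcomm
    rw [← hcomm]
    apply intervalIntegral.integral_congr
    intro α _
    exact hpt α
  rw [hre]
  have hint : (∫ α in (-(1:ℝ)/2)..(1/2), F α)
      = ∑ m1 ∈ s, ∑ m2 ∈ s, ∑ m3 ∈ s, ∑ m4 ∈ s,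
        ((if m1 + m2 = m3 + m4 then A c m1 * A c m2 * A c m3 * A c m4 else 0 : ℝ) : ℂ) := by
    rw [intervalIntegral.integral_congr (g := fun α => ∑ m1 ∈ s, ∑ m2 ∈ s, ∑ m3 ∈ s, ∑ m4 ∈ s,
      ((A c m1 * A c m2 * A c m3 * A c m4 : ℝ) : ℂ)
        * eC (((m4 : ℝ) + (m3 : ℝ) - (m2 : ℝ) - (m1 : ℝ)) * α)) (fun α _ => hFeq α)]
    rw [intervalIntegral.integral_finset_sum]
    swap
    · intro m1 _
      apply Continuous.intervalIntegrable
      apply continuous_finset_sum; intro m2 _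
      apply continuous_finset_sum; intro m3 _
      apply continuous_finset_sum; intro m4 _
      exact continuous_const.mul (continuous_eC_mul _)
    apply Finset.sum_congr rfl; intro m1 _
    rw [intervalIntegral.integral_finset_sum]
    swap
    · intro m2 _
      apply Continuous.intervalIntegrable
      apply continuous_finset_sum; intro m3 _
      apply continuous_finset_sum; intro m4 _
      exact continuous_const.mul (continuous_eC_mul _)
    apply Finset.sum_congr rfl; intro m2 _
    rw [intervalIntegral.integral_finset_sum]
    swap
    · intro m3 _
      apply Continuous.intervalIntegrable
      apply continuous_finset_sum; intro m4 _
      exact continuous_const.mul (continuous_eC_mul _)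
    apply Finset.sum_congr rfl; intro m3 _
    rw [intervalIntegral.integral_finset_sum]
    swap
    · intro m4 _
      apply Continuous.intervalIntegrable
      exact continuous_const.mul (continuous_eC_mul _)
    apply Finset.sum_congr rfl; intro m4 _
    rw [intervalIntegral.integral_const_mul]
    by_cases h : m1 + m2 = m3 + m4
    · have hz : ((m4 : ℝ) + (m3 : ℝ) - (m2 : ℝ) - (m1 : ℝ)) = 0 := by
        have : (m1 : ℝ) + (m2 : ℝ) = (m3 : ℝ) + (m4 : ℝ) := by exact_mod_cast h
        linarith
      simp only [hz, if_pos h, zero_mul]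
      rw [show eC 0 = 1 by simp [eC]]
      simp
      norm_num
    · have hk : ((m4 : ℤ) + m3 - m2 - m1) ≠ 0 := by
        intro hc; apply h; omega
      have hz : ∀ α : ℝ, (((m4 : ℝ) + (m3 : ℝ) - (m2 : ℝ) - (m1 : ℝ)) * α)
          = ((((m4 : ℤ) + m3 - m2 - m1 : ℤ) : ℝ) * α) := by
        intro α; push_cast; ring
      simp only [hz]
      rw [integral_eC _ hk, mul_zero, if_neg h]
      norm_num
  rw [hint]
  simp only [Complex.re_sum]
  norm_num

lemma A_nonneg {c : ℝ} (hc : 0 < c) (m : ℕ) : 0 ≤ A c m := by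
  unfold A; positivity

lemma sum_rpow_le' {t : ℝ} (ht : -1 < t) (M : ℕ) (hM : 1 ≤ M) :
    ∑ n ∈ Finset.Icc 1 M, (n : ℝ) ^ t ≤ (1 / (t + 1) + 1) * (M : ℝ) ^ (t + 1) := by
  have hM' : (1:ℝ) ≤ (M:ℝ) := by exact_mod_cast hM
  rcases lt_or_ge t 0 with h | h
  · refine (sum_rpow_le ht h M).trans ?_
    rw [div_eq_mul_inv, mul_comm]
    apply mul_le_mul_of_nonneg_right _ (Real.rpow_nonneg (by linarith) _)
    rw [inv_eq_one_div]
    linarith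
  · calc ∑ n ∈ Finset.Icc 1 M, (n : ℝ) ^ t ≤ ∑ _n ∈ Finset.Icc 1 M, (M : ℝ) ^ t := by
          apply Finset.sum_le_sum
          intro n hn
          simp only [Finset.mem_Icc] at hn
          exact Real.rpow_le_rpow (Nat.cast_nonneg _) (by exact_mod_cast hn.2) h
      _ = (M : ℝ) * (M : ℝ) ^ t := by
          rw [Finset.sum_const, Nat.card_Icc]
          simp [nsmul_eq_mul]
      _ = (M : ℝ) ^ (t + 1) := by
          rw [add_comm, Real.rpow_add (by linarith), Real.rpow_one]
      _ ≤ (1 / (t + 1) + 1) * (M : ℝ) ^ (t + 1) := by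
          apply le_mul_of_one_le_left (Real.rpow_nonneg (by linarith) _)
          have : 0 < 1 / (t + 1) := by positivity
          linarith

theorem stmt_17 (c : ℝ) (hc1 : 1 < c) (hc2 : c < 4109054 / 1999527) (hc3 : c ≠ 2) :
    ∃ C > 0, ∃ N₀ : ℕ, ∀ N : ℕ, N₀ ≤ N →
      (∫ α in (-(1 : ℝ) / 2)..(1 / 2), ‖G c N α‖ ^ 4) ≤ C * (N : ℝ) ^ (4 / c - 1) := by
  classical
  have hc0 : 0 < c := by linarith
  set s : ℝ := 1 / c - 1 with hs_def
  have hs1 : -1 < s := by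
    have : 0 < 1 / c := by positivity
    simp only [hs_def]; linarith
  have hs0 : s < 0 := by
    have : 1 / c < 1 := by rw [div_lt_one hc0]; linarith
    simp only [hs_def]; linarith
  have hsadd : 0 < s + 1 := by linarith
  set u : ℝ := 2 * s + 1 with hu_def
  set t : ℝ := 4 * s + 2 with ht_def
  have h1c : 1 / c = s + 1 := by rw [hs_def]; ring
  have h4c : 4 / c = 4 * (s + 1) := by
    have : (4:ℝ) / c = 4 * (1 / c) := by ring
    rw [this, h1c]
  have ht1 : -1 < t := by
    have hlt : c < 4 := by
      have : (4109054 : ℝ) / 1999527 < 4 := by norm_num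
      linarith
    have h14 : 1 < 4 / c := by rw [lt_div_iff₀ hc0]; linarith
    rw [ht_def]; rw [h4c] at h14; linarith
  have htexp : t + 1 = 4 / c - 1 := by
    rw [ht_def, h4c]; ring
  have ht3 : t + 1 ≤ 3 := by
    have : 4 / c ≤ 4 := by
      rw [div_le_iff₀ hc0]; nlinarith
    linarith [htexp]
  set K : ℝ := (1 / c) ^ 2 * (2 * (2:ℝ) ^ (-s) / (s + 1)) with hK_def
  have hK0 : 0 < K := by
    have h2 : (0:ℝ) < 2 * (2:ℝ) ^ (-s) := by
      have := Real.rpow_pos_of_pos (show (0:ℝ) < 2 by norm_num) (-s)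
      linarith
    rw [hK_def]
    exact mul_pos (by positivity) (div_pos h2 hsadd)
  have htp : (0:ℝ) < t + 1 := by linarith
  have hcoef : (0:ℝ) < 1 / (t + 1) + 1 := by
    have := div_pos (show (0:ℝ) < 1 by norm_num) htp
    linarith
  refine ⟨K ^ 2 * ((1 / (t + 1) + 1) * 8),
    mul_pos (pow_pos hK0 2) (mul_pos hcoef (by norm_num)), 1, fun N hN => ?_⟩
  have hN' : (1:ℝ) ≤ (N:ℝ) := by exact_mod_cast hN
  rw [expand_integral]
  set P2 : Finset (ℕ × ℕ) := Finset.Icc 1 N ×ˢ Finset.Icc 1 N with hP2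
  set Bf : ℕ → ℝ := fun n => ∑ q ∈ P2.filter (fun q => q.1 + q.2 = n), A c q.1 * A c q.2
    with hBf
  have hBf_nonneg : ∀ n, 0 ≤ Bf n := by
    intro n
    apply Finset.sum_nonneg
    intro q _
    exact mul_nonneg (A_nonneg hc0 _) (A_nonneg hc0 _)
  -- step 1 : quadruple sum = ∑_{p ∈ P2} A p.1 A p.2 * Bf (p.1+p.2)
  have step1 : ∑ m1 ∈ Finset.Icc 1 N, ∑ m2 ∈ Finset.Icc 1 N, ∑ m3 ∈ Finset.Icc 1 N,
        ∑ m4 ∈ Finset.Icc 1 N,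
          (if m1 + m2 = m3 + m4 then A c m1 * A c m2 * A c m3 * A c m4 else 0)
      = ∑ p ∈ P2, (A c p.1 * A c p.2) * Bf (p.1 + p.2) := by
    rw [hP2, Finset.sum_product]
    apply Finset.sum_congr rfl; intro m1 _
    apply Finset.sum_congr rfl; intro m2 _
    rw [hBf]
    dsimp only
    rw [Finset.sum_filter, Finset.mul_sum, hP2, Finset.sum_product]
    apply Finset.sum_congr rfl; intro m3 _
    apply Finset.sum_congr rfl; intro m4 _
    rw [mul_ite, mul_zero]
    dsimp only
    by_cases h : m1 + m2 = m3 + m4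
    · rw [if_pos h, if_pos h.symm]; ring
    · rw [if_neg h, if_neg (fun hh => h hh.symm)]
  rw [step1]
  -- step 2 : group by the value of p.1 + p.2
  have hmaps : ∀ p ∈ P2, p.1 + p.2 ∈ Finset.Icc 2 (2 * N) := by
    intro p hp
    rw [hP2, Finset.mem_product] at hp
    simp only [Finset.mem_Icc] at hp ⊢
    omega
  have step2 : ∑ p ∈ P2, (A c p.1 * A c p.2) * Bf (p.1 + p.2)
      = ∑ n ∈ Finset.Icc 2 (2 * N), Bf n * Bf n := by
    rw [← Finset.sum_fiberwise_of_maps_to hmaps]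
    apply Finset.sum_congr rfl
    intro n _
    have : ∀ p ∈ P2.filter (fun p => p.1 + p.2 = n),
        (A c p.1 * A c p.2) * Bf (p.1 + p.2) = (A c p.1 * A c p.2) * Bf n := by
      intro p hp
      rw [Finset.mem_filter] at hp
      rw [hp.2]
    rw [Finset.sum_congr rfl this, ← Finset.sum_mul]
  rw [step2]
  -- step 3 : bound Bf n
  have hBf_le : ∀ n ∈ Finset.Icc 2 (2 * N), Bf n ≤ K * (n : ℝ) ^ u := by
    intro n hn
    simp only [Finset.mem_Icc] at hn
    have hn1 : 1 ≤ n := by omega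
    have key : Bf n ≤ ∑ m ∈ Finset.Icc 1 (n - 1), A c m * A c (n - m) := by
      rw [hBf]
      dsimp only
      rw [Finset.sum_filter, hP2, Finset.sum_product]
      have inner : ∀ m3 ∈ Finset.Icc 1 N,
          (∑ m4 ∈ Finset.Icc 1 N, if m3 + m4 = n then A c m3 * A c m4 else 0)
          ≤ (if m3 ∈ Finset.Icc 1 (n - 1) then A c m3 * A c (n - m3) else 0) := by
        intro m3 hm3
        simp only [Finset.mem_Icc] at hm3
        by_cases hcase : 1 ≤ n - m3 ∧ n - m3 ≤ N ∧ m3 < n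
        · have hmem : n - m3 ∈ Finset.Icc 1 N := by
            simp only [Finset.mem_Icc]; omega
          have heval : (∑ m4 ∈ Finset.Icc 1 N, if m3 + m4 = n then A c m3 * A c m4 else 0)
              = A c m3 * A c (n - m3) := by
            rw [Finset.sum_eq_single_of_mem (n - m3) hmem]
            · rw [if_pos (by omega)]
            · intro j _ hj
              rw [if_neg (by omega)]
          rw [heval, if_pos (by simp only [Finset.mem_Icc]; omega)]
        · have heval : (∑ m4 ∈ Finset.Icc 1 N, if m3 + m4 = n then A c m3 * A c m4 else 0)
              = 0 := by
            apply Finset.sum_eq_zero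
            intro m4 hm4
            simp only [Finset.mem_Icc] at hm4
            rw [if_neg (by omega)]
          rw [heval]
          split_ifs
          · exact mul_nonneg (A_nonneg hc0 _) (A_nonneg hc0 _)
          · exact le_refl 0
      refine (Finset.sum_le_sum inner).trans ?_
      rw [Finset.sum_ite_mem]
      apply Finset.sum_le_sum_of_subset_of_nonneg Finset.inter_subset_right
      intro i _ _
      exact mul_nonneg (A_nonneg hc0 _) (A_nonneg hc0 _)
    refine key.trans ?_
    have : ∑ m ∈ Finset.Icc 1 (n - 1), A c m * A c (n - m)
        = (1 / c) ^ 2 * ∑ m ∈ Finset.Icc 1 (n - 1), (m : ℝ) ^ s * ((n - m : ℕ) : ℝ) ^ s := by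
      rw [Finset.mul_sum]
      apply Finset.sum_congr rfl
      intro m _
      rw [A, A]
      ring
    rw [this, hK_def, hu_def]
    rw [mul_assoc]
    apply mul_le_mul_of_nonneg_left _ (by positivity)
    exact conv_bound hs1 hs0 n hn1
  -- step 4 : sum the bound
  have step4 : ∑ n ∈ Finset.Icc 2 (2 * N), Bf n * Bf n
      ≤ K ^ 2 * ∑ n ∈ Finset.Icc 2 (2 * N), (n : ℝ) ^ t := by
    rw [Finset.mul_sum]
    apply Finset.sum_le_sum
    intro n hn
    simp only [Finset.mem_Icc] at hn
    have hnpos : (0:ℝ) < (n:ℝ) := by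
      have : 1 ≤ n := by omega
      exact_mod_cast Nat.pos_of_ne_zero (by omega)
    have h1 : Bf n * Bf n ≤ (K * (n:ℝ) ^ u) * (K * (n:ℝ) ^ u) :=
      mul_le_mul (hBf_le n (by simp only [Finset.mem_Icc]; omega))
        (hBf_le n (by simp only [Finset.mem_Icc]; omega)) (hBf_nonneg n)
        (mul_nonneg hK0.le (Real.rpow_nonneg hnpos.le _))
    refine h1.trans_eq ?_
    rw [show (K * (n:ℝ) ^ u) * (K * (n:ℝ) ^ u) = K ^ 2 * ((n:ℝ) ^ u * (n:ℝ) ^ u) by ring,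
      ← Real.rpow_add hnpos]
    congr 1
    congr 1
    rw [hu_def, ht_def]; ring
  refine step4.trans ?_
  have step5 : ∑ n ∈ Finset.Icc 2 (2 * N), (n : ℝ) ^ t
      ≤ (1 / (t + 1) + 1) * ((2 * N : ℕ) : ℝ) ^ (t + 1) := by
    refine le_trans ?_ (sum_rpow_le' ht1 (2 * N) (by omega))
    apply Finset.sum_le_sum_of_subset_of_nonneg
    · intro a ha
      simp only [Finset.mem_Icc] at ha ⊢
      omega
    · intro i _ _
      exact Real.rpow_nonneg (Nat.cast_nonneg _) _
  have step6 : ((2 * N : ℕ) : ℝ) ^ (t + 1) ≤ 8 * (N : ℝ) ^ (t + 1) := by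
    have hcast : ((2 * N : ℕ) : ℝ) = 2 * (N : ℝ) := by push_cast; ring
    rw [hcast, Real.mul_rpow (by norm_num) (by linarith)]
    apply mul_le_mul_of_nonneg_right _ (Real.rpow_nonneg (by linarith) _)
    calc (2:ℝ) ^ (t + 1) ≤ (2:ℝ) ^ (3:ℝ) :=
          Real.rpow_le_rpow_of_exponent_le (by norm_num) ht3
      _ = 8 := by
          rw [show (3:ℝ) = ((3:ℕ):ℝ) by norm_num, Real.rpow_natCast]
          norm_num
  calc K ^ 2 * ∑ n ∈ Finset.Icc 2 (2 * N), (n : ℝ) ^ t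
      ≤ K ^ 2 * ((1 / (t + 1) + 1) * ((2 * N : ℕ) : ℝ) ^ (t + 1)) := by
        apply mul_le_mul_of_nonneg_left step5 (by positivity)
    _ ≤ K ^ 2 * ((1 / (t + 1) + 1) * (8 * (N : ℝ) ^ (t + 1))) := by
        apply mul_le_mul_of_nonneg_left _ (by positivity)
        apply mul_le_mul_of_nonneg_left step6 hcoef.le
    _ = K ^ 2 * ((1 / (t + 1) + 1) * 8) * (N : ℝ) ^ (t + 1) := by ring
    _ = K ^ 2 * ((1 / (t + 1) + 1) * 8) * (N : ℝ) ^ (4 / c - 1) := by rw [htexp]
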